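/- arXiv:1107.1535 — 2 statements merged into one kernel-verified Lean document; each statement's English description precedes it below -/
import Mathlib

section
/- Let G be a finite abelian group of order q, H a subgroup of G, M a maximal proper subgroup of H, q̄ = |H|/|M|, T_H a transversal of H in G with fixed t_H ∈ T_H, T_M a transversal of M in H, and W̄ the induced channel on the cosets {t_H + t_M + M : t_M ∈ T_M}. Let d ∈ H \ M and ε ∈ [0,1]. If Z_d(W) > 1 − ε, then Z_d(W̄) > 1 − 2q(2ε − ε²)/(q̄·|M|), where Z_d(W̄) = (1/q̄)·Σ_{t_M∈T_M} Σ_{y∈Y} √( W̄(y | t_H + t_M + M) · W̄(y | t_H + t_M + d + M) ) and t_H + t_M + d + M denotes the coset of M (within t_H + H) containing t_H + t_M + d. -/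
open Finset

/-- Bhattacharyya distance between two input symbols. -/
noncomputable def Zpair {G Y : Type} [Fintype Y] (W : G → Y → ℝ) (x x' : G) : ℝ :=
  ∑ y : Y, Real.sqrt (W x y * W x' y)

/-- `Z_d(W) = (1/q)·Σ_{x∈G} Z(W_{x,x+d})`. -/
noncomputable def Zd {G Y : Type} [Fintype G] [Fintype Y] [Add G]
    (W : G → Y → ℝ) (d : G) : ℝ :=
  (1 / (Fintype.card G : ℝ)) * ∑ x : G, Zpair W x (x + d)

/-- The induced channel `W̄` on cosets of `M` inside the coset `t_H + H`:
`W̄(y | t_H + t + M) = (1/|M|)·Σ_{m∈M} W(y | t_H + t + m)`. -/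
noncomputable def inducedChannel {G Y : Type} [Fintype G] [AddCommGroup G] [DecidableEq G]
    (W : G → Y → ℝ) (tH : G) (M : AddSubgroup G) [DecidablePred (· ∈ M)] :
    G → Y → ℝ :=
  fun t y => (1 / (Nat.card M : ℝ)) *
    ∑ m ∈ Finset.univ.filter (fun m : G => m ∈ M), W (tH + t + m) y

/-- Cauchy–Schwarz: a sum of square roots of products is at most the square root
of the product of the sums. -/
private lemma sum_sqrt_mul_le {ι : Type*} (s : Finset ι) (f g : ι → ℝ)
    (hf : ∀ i, 0 ≤ f i) (hg : ∀ i, 0 ≤ g i) :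
    ∑ i ∈ s, Real.sqrt (f i * g i) ≤ Real.sqrt ((∑ i ∈ s, f i) * (∑ i ∈ s, g i)) := by
  rw [Real.sqrt_mul (Finset.sum_nonneg fun i _ => hf i)]
  calc ∑ i ∈ s, Real.sqrt (f i * g i) = ∑ i ∈ s, Real.sqrt (f i) * Real.sqrt (g i) := by
        simp_rw [fun i => Real.sqrt_mul (hf i) (g i)]
    _ ≤ _ := Real.sum_sqrt_mul_sqrt_le s hf hg

private lemma Zpair_nonneg {G Y : Type} [Fintype Y] (W : G → Y → ℝ) (x x' : G) :
    0 ≤ Zpair W x x' :=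
  Finset.sum_nonneg fun _ _ => Real.sqrt_nonneg _

private lemma Zpair_le_one {G Y : Type} [Fintype Y] (W : G → Y → ℝ)
    (hW0 : ∀ x y, 0 ≤ W x y) (hW1 : ∀ x, ∑ y, W x y = 1) (x x' : G) :
    Zpair W x x' ≤ 1 := by
  have h := sum_sqrt_mul_le univ (W x) (W x') (hW0 x) (hW0 x')
  simpa [Zpair, hW1, Real.sqrt_one] using h

/-- Shifting the index of a sum over a subgroup by an element of the subgroup. -/
private lemma sum_shift {G : Type} [AddCommGroup G] [Fintype G] [DecidableEq G]
    (M : AddSubgroup G) [DecidablePred (· ∈ M)] (δ : G) (hδ : δ ∈ M) (f : G → ℝ) :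
    ∑ m ∈ Finset.univ.filter (fun m : G => m ∈ M), f m =
      ∑ m ∈ Finset.univ.filter (fun m : G => m ∈ M), f (m + δ) := by
  refine Finset.sum_nbij' (fun m => m - δ) (fun m => m + δ) ?_ ?_ ?_ ?_ ?_
  · intro a ha
    simp only [Finset.mem_filter, Finset.mem_univ, true_and] at ha ⊢
    exact M.sub_mem ha hδ
  · intro a ha
    simp only [Finset.mem_filter, Finset.mem_univ, true_and] at ha ⊢
    exact M.add_mem ha hδ
  · intro a _
    abel
  · intro a _
    abel
  · intro a _
    congr 1
    abel

/-- `Z_d(W) > 1 − ε` with `d ∈ H \ M` implies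
`Z_d(W̄) > 1 − 2q(2ε − ε²)/(q̄·|M|)` for the induced channel `W̄`, where `ρ` picks the
representative in `T_M` of the coset of `M` (within `H`) containing its argument. -/
theorem Zd_inducedChannel_gt
    {G Y : Type} [Fintype G] [AddCommGroup G] [DecidableEq G] [Fintype Y]
    (W : G → Y → ℝ) (hW0 : ∀ x y, 0 ≤ W x y) (hW1 : ∀ x, ∑ y, W x y = 1)
    (H M : AddSubgroup G) [DecidablePred (· ∈ M)]
    (hMH : M < H)
    (hMmax : ∀ K : AddSubgroup G, M ≤ K → K ≤ H → K = M ∨ K = H)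
    (TH : Finset G) (hTH : ∀ g : G, ∃! t, t ∈ TH ∧ g - t ∈ H) (tH : G) (htH : tH ∈ TH)
    (TM : Finset G) (hTMsub : (TM : Set G) ⊆ (H : Set G))
    (hTM : ∀ h ∈ H, ∃! t, t ∈ TM ∧ h - t ∈ M)
    (ρ : G → G) (hρ : ∀ h ∈ H, ρ h ∈ TM ∧ h - ρ h ∈ M)
    (d : G) (hd : d ∈ (H : Set G) \ (M : Set G))
    (ε : ℝ) (hε : ε ∈ Set.Icc (0 : ℝ) 1)
    (hZ : Zd W d > 1 - ε) :
    (1 / ((Nat.card H : ℝ) / (Nat.card M : ℝ))) *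
        ∑ t ∈ TM, Zpair (inducedChannel W tH M) t (ρ (t + d)) >
      1 - 2 * (Fintype.card G : ℝ) * (2 * ε - ε ^ 2) /
          (((Nat.card H : ℝ) / (Nat.card M : ℝ)) * (Nat.card M : ℝ)) := by
  classical
  obtain ⟨hdH, hdM⟩ := hd
  have hεl : (0:ℝ) ≤ ε := hε.1
  have hεr : ε ≤ 1 := hε.2
  -- notation
  set Mf : Finset G := Finset.univ.filter (fun m : G => m ∈ M) with hMf
  set Sf : Finset G := Finset.univ.filter (fun x : G => x - tH ∈ H) with hSf
  set c : ℝ := (Nat.card M : ℝ) with hc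
  set Hr : ℝ := (Nat.card H : ℝ) with hHr
  set q : ℝ := (Fintype.card G : ℝ) with hq
  have hcpos : 0 < c := by
    have h0 : 0 < Nat.card M := Nat.card_pos
    rw [hc]; exact_mod_cast h0
  have hHpos : 0 < Hr := by
    have h0 : 0 < Nat.card H := Nat.card_pos
    rw [hHr]; exact_mod_cast h0
  have hqpos : 0 < q := by
    have h0 : 0 < Fintype.card G := Fintype.card_pos
    rw [hq]; exact_mod_cast h0
  -- cardinality facts
  have hMfcard : (Mf.card : ℝ) = c := by
    rw [hc, Nat.card_eq_fintype_card]
    norm_cast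
    rw [hMf]
    exact (Fintype.card_subtype _).symm
  have hSfcard : (Sf.card : ℝ) = Hr := by
    have h1 : Sf.card = (Finset.univ.filter (fun x : G => x ∈ H)).card := by
      refine Finset.card_nbij' (fun x => x - tH) (fun x => x + tH) ?_ ?_ ?_ ?_
      · intro a ha
        simp only [hSf, Finset.mem_filter, Finset.mem_univ, true_and] at ha ⊢
        simpa using ha
      · intro a ha
        simp only [hSf, Finset.mem_filter, Finset.mem_univ, true_and] at ha ⊢
        simpa using ha
      · intro a _
        dsimp only
        abel
      · intro a _
        dsimp only
        abel
    rw [h1, hHr, Nat.card_eq_fintype_card]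
    norm_cast
    exact (Fintype.card_subtype _).symm
  -- ε is positive
  have hZd_le : Zd W d ≤ 1 := by
    rw [Zd]
    have hsum : ∑ x : G, Zpair W x (x + d) ≤ q := by
      calc ∑ x : G, Zpair W x (x + d) ≤ ∑ _x : G, (1:ℝ) :=
            Finset.sum_le_sum fun x _ => Zpair_le_one W hW0 hW1 x (x + d)
        _ = q := by simp [hq]
    calc (1 / q) * ∑ x : G, Zpair W x (x + d) ≤ (1 / q) * q := by
          apply mul_le_mul_of_nonneg_left hsum
          positivity
      _ = 1 := by field_simp
  have hεpos : 0 < ε := by linarith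
  -- the sum over all of G is large
  have hB : q * (1 - ε) < ∑ x : G, Zpair W x (x + d) := by
    have hz := hZ
    rw [Zd] at hz
    calc q * (1-ε) < q * ((1/q) * ∑ x : G, Zpair W x (x + d)) := by
          exact mul_lt_mul_of_pos_left hz hqpos
      _ = (∑ x : G, Zpair W x (x + d)) := by field_simp
  -- sum over Sf is nearly as large
  have hA : ∑ x ∈ Sf, Zpair W x (x + d) ≥ (∑ x : G, Zpair W x (x + d)) - (q - Hr) := by
    have hsplit := Finset.sum_filter_add_sum_filter_not Finset.univ
      (fun x : G => x - tH ∈ H) (fun x => Zpair W x (x + d))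
    have hcards : (Sf.card : ℝ) + ((Finset.univ.filter (fun x : G => ¬ (x - tH ∈ H))).card : ℝ)
        = q := by
      rw [hq]
      norm_cast
      exact Finset.card_filter_add_card_filter_not _
    have hcompl : ∑ x ∈ Finset.univ.filter (fun x : G => ¬ (x - tH ∈ H)),
        Zpair W x (x + d) ≤ q - Hr := by
      calc ∑ x ∈ Finset.univ.filter (fun x : G => ¬ (x - tH ∈ H)), Zpair W x (x + d)
          ≤ ∑ _x ∈ Finset.univ.filter (fun x : G => ¬ (x - tH ∈ H)), (1:ℝ) :=
            Finset.sum_le_sum fun x _ => Zpair_le_one W hW0 hW1 x (x + d)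
        _ = ((Finset.univ.filter (fun x : G => ¬ (x - tH ∈ H))).card : ℝ) := by simp
        _ = q - Hr := by rw [← hcards, hSfcard]; ring
    have : ∑ x : G, Zpair W x (x + d) =
        (∑ x ∈ Sf, Zpair W x (x + d)) +
        ∑ x ∈ Finset.univ.filter (fun x : G => ¬ (x - tH ∈ H)), Zpair W x (x + d) := by
      rw [← hsplit]
    linarith
  -- per-t lower bound via Cauchy-Schwarz
  have step1 : ∀ t ∈ TM, (1/c) * ∑ m ∈ Mf, Zpair W (tH + t + m) (tH + t + m + d)
      ≤ Zpair (inducedChannel W tH M) t (ρ (t + d)) := by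
    intro t htTM
    have htH' : t ∈ H := hTMsub htTM
    have htd : t + d ∈ H := H.add_mem htH' hdH
    obtain ⟨hρ1, hρ2⟩ := hρ (t + d) htd
    set δ : G := (t + d) - ρ (t + d) with hδdef
    have hδM : δ ∈ M := hρ2
    -- rewrite the induced channel at ρ (t+d)
    have hrw : ∀ y, inducedChannel W tH M (ρ (t + d)) y
        = (1/c) * ∑ m ∈ Mf, W (tH + t + m + d) y := by
      intro y
      rw [inducedChannel]
      congr 1
      rw [sum_shift M δ hδM (fun m => W (tH + ρ (t + d) + m) y)]
      apply Finset.sum_congr rfl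
      intro m _
      congr 1
      rw [hδdef]
      abel
    have hrw0 : ∀ y, inducedChannel W tH M t y
        = (1/c) * ∑ m ∈ Mf, W (tH + t + m) y := by
      intro y; rfl
    rw [Zpair]
    have key : ∀ y : Y, (1/c) * ∑ m ∈ Mf, Real.sqrt (W (tH + t + m) y * W (tH + t + m + d) y)
        ≤ Real.sqrt (inducedChannel W tH M t y * inducedChannel W tH M (ρ (t + d)) y) := by
      intro y
      rw [hrw y, hrw0 y]
      have hCS := sum_sqrt_mul_le Mf (fun m => W (tH + t + m) y)
        (fun m => W (tH + t + m + d) y) (fun m => hW0 _ y) (fun m => hW0 _ y)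
      have hfac : (1/c) * (∑ m ∈ Mf, W (tH + t + m) y) *
          ((1/c) * ∑ m ∈ Mf, W (tH + t + m + d) y)
          = (1/c)^2 * ((∑ m ∈ Mf, W (tH + t + m) y) * ∑ m ∈ Mf, W (tH + t + m + d) y) := by
        ring
      rw [hfac, Real.sqrt_mul (by positivity), Real.sqrt_sq (by positivity)]
      exact mul_le_mul_of_nonneg_left hCS (by positivity)
    calc (1/c) * ∑ m ∈ Mf, Zpair W (tH + t + m) (tH + t + m + d)
        = ∑ y : Y, (1/c) * ∑ m ∈ Mf, Real.sqrt (W (tH + t + m) y * W (tH + t + m + d) y) := by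
          simp only [Zpair, ← Finset.mul_sum]
          congr 1
          exact Finset.sum_comm
      _ ≤ _ := Finset.sum_le_sum fun y _ => key y
  -- bijection: double sum equals sum over Sf
  have step2 : ∑ t ∈ TM, ∑ m ∈ Mf, Zpair W (tH + t + m) (tH + t + m + d)
      = ∑ x ∈ Sf, Zpair W x (x + d) := by
    rw [← Finset.sum_product']
    refine Finset.sum_nbij' (fun p : G × G => tH + p.1 + p.2)
      (fun x => (ρ (x - tH), (x - tH) - ρ (x - tH))) ?_ ?_ ?_ ?_ ?_
    · rintro ⟨t, m⟩ hp
      rw [Finset.mem_product] at hp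
      obtain ⟨ht, hm⟩ := hp
      simp only [hMf, Finset.mem_filter, Finset.mem_univ, true_and] at hm
      simp only [hSf, Finset.mem_filter, Finset.mem_univ, true_and]
      have : tH + t + m - tH = t + m := by abel
      rw [this]
      exact H.add_mem (hTMsub ht) (hMH.le hm)
    · intro x hx
      simp only [hSf, Finset.mem_filter, Finset.mem_univ, true_and] at hx
      obtain ⟨h1, h2⟩ := hρ (x - tH) hx
      rw [Finset.mem_product]
      constructor
      · exact h1
      · simp only [hMf, Finset.mem_filter, Finset.mem_univ, true_and]
        exact h2
    · rintro ⟨t, m⟩ hp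
      rw [Finset.mem_product] at hp
      obtain ⟨ht, hm⟩ := hp
      simp only [hMf, Finset.mem_filter, Finset.mem_univ, true_and] at hm
      have harg : tH + t + m - tH = t + m := by abel
      have hhH : t + m ∈ H := H.add_mem (hTMsub ht) (hMH.le hm)
      have huniq := hTM (t + m) hhH
      have hρmem := hρ (t + m) hhH
      have heq : ρ (t + m) = t := by
        exact huniq.unique ⟨hρmem.1, hρmem.2⟩ ⟨ht, by simpa using hm⟩
      dsimp only
      rw [harg, heq]
      congr 1
      abel
    · intro x hx
      simp only [hSf, Finset.mem_filter, Finset.mem_univ, true_and] at hx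
      dsimp only
      abel
    · rintro ⟨t, m⟩ _
      rfl
  -- put it together
  set S1 : ℝ := ∑ t ∈ TM, Zpair (inducedChannel W tH M) t (ρ (t + d)) with hS1def
  have hS1 : (1/c) * ∑ x ∈ Sf, Zpair W x (x + d) ≤ S1 := by
    calc (1/c) * ∑ x ∈ Sf, Zpair W x (x + d)
        = ∑ t ∈ TM, (1/c) * ∑ m ∈ Mf, Zpair W (tH + t + m) (tH + t + m + d) := by
          rw [← step2, Finset.mul_sum]
      _ ≤ S1 := Finset.sum_le_sum step1
  -- final arithmetic
  have hkey : Hr - 2 * q * (2 * ε - ε ^ 2) < c * S1 := by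
    have h1 : (∑ x ∈ Sf, Zpair W x (x + d)) ≤ c * S1 := by
      have := mul_le_mul_of_nonneg_left hS1 (le_of_lt hcpos)
      calc (∑ x ∈ Sf, Zpair W x (x + d))
          = c * ((1/c) * ∑ x ∈ Sf, Zpair W x (x + d)) := by field_simp
        _ ≤ c * S1 := this
    nlinarith [hA, hB, hqpos, hεpos, hεr, mul_pos hqpos hεpos]
  have hmulc : Hr / c * c = Hr := div_mul_cancel₀ _ (ne_of_gt hcpos)
  have hlhs : (1:ℝ) / (Hr / c) * S1 = (c * S1) / Hr := by
    rw [one_div_div]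
    ring
  rw [gt_iff_lt, hmulc, hlhs,
    show (1:ℝ) - 2 * q * (2 * ε - ε ^ 2) / Hr = (Hr - 2 * q * (2 * ε - ε ^ 2)) / Hr by
      field_simp]
  exact (div_lt_div_iff_of_pos_right hHpos).mpr hkey
end

section
/- Let G be a finite abelian group, n a positive integer, N = 2ⁿ, and let A = F^{⊗n} be the n-fold Kronecker power of [[1,0],[1,1]], regarded as a 0/1 matrix. Define the encoding map φ : G^N → G^N by φ(u)_j = Σ_{i : A_{ij} = 1} u_i (sum in G). Then: (a) φ is a bijection of G^N; and (b) for any partition {A_H : H ≤ G} of {1,…,N} indexed by the subgroups of G and any choice of transversals T_H of H in G, distinct messages m₁ ≠ m₂ in ⊕_{H ≤ G} T_H^{A_H} (the set of tuples whose i-th entry lies in T_H whenever i ∈ A_H) satisfy φ(m₁) − φ(m₂) ∉ C_i, where C_i = φ( ⊕_{H ≤ G} H^{A_H} ) is the inner group code; that is, distinct messages are mapped into distinct cosets of C_i, so the polar encoder is a nested group code. -/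
open Finset

/-- the polar encoding map `φ` given by the `n`-fold Kronecker power of
`[[1,0],[1,1]]` (a 0/1 matrix, indexed by `(Fin 2)ⁿ`) is a bijection of `G^N`, and
distinct messages with entries in the chosen transversals are mapped into distinct
cosets of the inner group code `C_i`; i.e. the polar encoder is a nested group code. -/
theorem polar_encoder_nested_group_code
    {G : Type} [Fintype G] [AddCommGroup G] (n : ℕ)
    (F : Matrix (Fin 2) (Fin 2) ℕ) (hF : F = !![1, 0; 1, 1])
    (A : Matrix (Fin n → Fin 2) (Fin n → Fin 2) ℕ)
    (hA : ∀ x y, A x y = ∏ i : Fin n, F (x i) (y i))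
    (φ : ((Fin n → Fin 2) → G) → ((Fin n → Fin 2) → G))
    (hφ : ∀ u j, φ u j = ∑ i ∈ Finset.univ.filter (fun i => A i j = 1), u i)
    -- the partition `{A_H : H ≤ G}` of the index set, encoded by the map sending each
    -- index to the subgroup of its class
    (cls : (Fin n → Fin 2) → AddSubgroup G)
    -- a transversal `T_H` of each subgroup `H` in `G`
    (Tsel : AddSubgroup G → Set G)
    (hTsel : ∀ (H : AddSubgroup G) (g : G), ∃! t, t ∈ Tsel H ∧ g - t ∈ H)
    -- the inner group code
    (Ci : Set ((Fin n → Fin 2) → G))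
    (hCi : Ci = φ '' {u | ∀ i, u i ∈ cls i}) :
    Function.Bijective φ ∧
    ∀ m₁ m₂ : (Fin n → Fin 2) → G,
      (∀ i, m₁ i ∈ Tsel (cls i)) → (∀ i, m₂ i ∈ Tsel (cls i)) → m₁ ≠ m₂ →
        φ m₁ - φ m₂ ∉ Ci := by
  subst hF
  subst hCi
  -- entrywise characterization of the Kronecker power
  have hFval : ∀ a b : Fin 2, (!![1, 0; 1, 1] : Matrix (Fin 2) (Fin 2) ℕ) a b = 1
      ↔ (b = 1 → a = 1) := by
    intro a b; fin_cases a <;> fin_cases b <;> simp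
  have hA1 : ∀ i j : Fin n → Fin 2,
      A i j = 1 ↔ ∀ t, (!![1, 0; 1, 1] : Matrix (Fin 2) (Fin 2) ℕ) (i t) (j t) = 1 := by
    intro i j
    rw [hA]
    constructor
    · intro h t
      have hd := Finset.dvd_prod_of_mem
        (fun t => (!![1, 0; 1, 1] : Matrix (Fin 2) (Fin 2) ℕ) (i t) (j t)) (Finset.mem_univ t)
      rw [h] at hd
      exact Nat.dvd_one.mp hd
    · intro h; simp [h]
  have hdiag : ∀ j : Fin n → Fin 2, A j j = 1 := by
    intro j
    rw [hA1]
    intro t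
    exact (hFval _ _).mpr (fun h => h)
  -- count of ones
  set c : (Fin n → Fin 2) → ℕ := fun j => (Finset.univ.filter (fun t => j t = 1)).card with hc
  have hsub : ∀ i j : Fin n → Fin 2, A i j = 1 →
      (Finset.univ.filter (fun t => j t = 1)) ⊆ (Finset.univ.filter (fun t => i t = 1)) := by
    intro i j hAij t ht
    simp only [Finset.mem_filter, Finset.mem_univ, true_and] at ht ⊢
    exact (hFval _ _).mp ((hA1 i j).mp hAij t) ht
  have hclt : ∀ i j : Fin n → Fin 2, A i j = 1 → i ≠ j → c j < c i := by
    intro i j hAij hne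
    apply Finset.card_lt_card
    refine ⟨hsub i j hAij, ?_⟩
    intro hcon
    apply hne
    funext t
    by_cases h1 : j t = 1
    · have : t ∈ Finset.univ.filter (fun t => i t = 1) :=
        hsub i j hAij (Finset.mem_filter.mpr ⟨Finset.mem_univ t, h1⟩)
      simp only [Finset.mem_filter] at this
      rw [this.2, h1]
    · by_contra hit
      have hi1 : i t = 1 := by omega
      have : t ∈ Finset.univ.filter (fun t => j t = 1) :=
        hcon (Finset.mem_filter.mpr ⟨Finset.mem_univ t, hi1⟩)
      simp only [Finset.mem_filter] at this
      exact h1 this.2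
  have hcle : ∀ j : Fin n → Fin 2, c j ≤ n := by
    intro j
    calc c j ≤ (Finset.univ : Finset (Fin n)).card := Finset.card_filter_le _ _
      _ = n := by simp
  -- key: kernel is trivial
  have key : ∀ u : (Fin n → Fin 2) → G, (∀ j, φ u j = 0) → ∀ j, u j = 0 := by
    intro u hu
    suffices H : ∀ m : ℕ, ∀ j : Fin n → Fin 2, n - c j = m → u j = 0 by
      intro j; exact H _ j rfl
    intro m
    induction m using Nat.strong_induction_on with
    | _ m ih =>
      intro j hj
      have hj0 := hu j
      rw [hφ u j] at hj0
      have hjmem : j ∈ Finset.univ.filter (fun i => A i j = 1) := by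
        simp [hdiag j]
      rw [← Finset.sum_erase_add _ _ hjmem] at hj0
      have hrest : ∀ i ∈ (Finset.univ.filter (fun i => A i j = 1)).erase j, u i = 0 := by
        intro i hi
        obtain ⟨hine, himem⟩ := Finset.mem_erase.mp hi
        have hAij : A i j = 1 := (Finset.mem_filter.mp himem).2
        have hlt : c j < c i := hclt i j hAij hine
        have : n - c i < m := by
          have := hcle i
          omega
        exact ih _ this i rfl
      rw [Finset.sum_eq_zero hrest, zero_add] at hj0
      exact hj0
  -- φ is additive with respect to subtraction
  have hφsub : ∀ u v : (Fin n → Fin 2) → G, φ (u - v) = φ u - φ v := by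
    intro u v
    funext j
    simp only [Pi.sub_apply, hφ, Finset.sum_sub_distrib]
  have hinj : Function.Injective φ := by
    intro u v huv
    have h0 : ∀ j, φ (u - v) j = 0 := by
      intro j
      rw [hφsub, Pi.sub_apply, huv, sub_self]
    have := key _ h0
    funext j
    have := this j
    rw [Pi.sub_apply] at this
    exact sub_eq_zero.mp this
  have hbij : Function.Bijective φ := Finite.injective_iff_bijective.mp hinj
  refine ⟨hbij, ?_⟩
  intro m₁ m₂ h₁ h₂ hne hmem
  obtain ⟨w, hw, hweq⟩ := hmem
  have heq : φ (m₁ - m₂) = φ w := by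
    rw [hφsub, hweq]
  have hw2 : m₁ - m₂ = w := hinj heq
  apply hne
  funext i
  have hwi : m₁ i - m₂ i ∈ cls i := by
    have := hw2 ▸ hw
    exact this i
  obtain ⟨t, ht, huniq⟩ := hTsel (cls i) (m₁ i)
  have e1 : m₁ i = t := huniq _ ⟨h₁ i, by simpa using (cls i).zero_mem⟩
  have e2 : m₂ i = t := huniq _ ⟨h₂ i, hwi⟩
  rw [e1, e2]
end
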